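/- Rational rotation numbers are attained on nondegenerate closed intervals of parameters (Arnold tongues): for every rational number p/q (p ∈ ℤ, q ≥ 1) there exist real numbers θ₁ < θ₂ such that {θ ∈ ℝ : ρ(θ) = p/q} = [θ₁, θ₂]; moreover, for every θ in this interval the map A_θ has a periodic orbit of rotation number p/q, i.e. there exists x ∈ ℝ with A_θ^{∘q}(x) = x + p. -/

import Mathlib

/-- The Arnold (standard) map lift restricted to the real line:
`A_θ(x) = x + θ + sin(2πx)/(2π)`. -/
noncomputable def arnoldR (θ : ℝ) (x : ℝ) : ℝ :=
  x + θ + Real.sin (2 * Real.pi * x) / (2 * Real.pi)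

open Real Filter

lemma sin_diff_le (a b : ℝ) : |Real.sin a - Real.sin b| ≤ |a - b| := by
  rw [Real.sin_sub_sin, abs_mul, abs_mul]
  have h1 : |Real.sin ((a-b)/2)| ≤ |(a-b)/2| := Real.abs_sin_le_abs
  have h2 : |Real.cos ((a+b)/2)| ≤ 1 := Real.abs_cos_le_one _
  have h3 : (0:ℝ) ≤ |Real.sin ((a-b)/2)| := abs_nonneg _
  have h4 : |(a-b)/2| = |a-b|/2 := by rw [abs_div]; norm_num
  have h5 : |(2:ℝ)| = 2 := by norm_num
  rw [h5]
  nlinarith [abs_nonneg (a-b), abs_nonneg (Real.cos ((a+b)/2))]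

lemma sin_div_diff {x y : ℝ} (h : x ≤ y) :
    -(y - x) ≤ (Real.sin (2 * π * y) - Real.sin (2 * π * x)) / (2 * π) ∧
    (Real.sin (2 * π * y) - Real.sin (2 * π * x)) / (2 * π) ≤ y - x := by
  have hs := sin_diff_le (2 * π * y) (2 * π * x)
  have hπ : (0:ℝ) < π := Real.pi_pos
  have h1 : |2 * π * y - 2 * π * x| = 2 * π * (y - x) := by
    rw [abs_of_nonneg] <;> nlinarith
  rw [h1] at hs
  have hs' := abs_le.1 hs
  constructor
  · rw [le_div_iff₀ (by positivity)]; nlinarith [hs'.1]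
  · rw [div_le_iff₀ (by positivity)]; nlinarith [hs'.2]

lemma arnold_mono (θ : ℝ) : Monotone (arnoldR θ) := by
  intro x y h
  have := (sin_div_diff h).1
  unfold arnoldR
  have heq : Real.sin (2*π*y)/(2*π) - Real.sin (2*π*x)/(2*π)
      = (Real.sin (2*π*y) - Real.sin (2*π*x))/(2*π) := by ring
  nlinarith [this, heq]

lemma arnold_lip (θ : ℝ) {x y : ℝ} (h : x ≤ y) :
    arnoldR θ y - arnoldR θ x ≤ 2 * (y - x) := by
  have := (sin_div_diff h).2
  unfold arnoldR
  have heq : Real.sin (2*π*y)/(2*π) - Real.sin (2*π*x)/(2*π)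
      = (Real.sin (2*π*y) - Real.sin (2*π*x))/(2*π) := by ring
  nlinarith [this, heq]

lemma iter_mono (θ : ℝ) (n : ℕ) : Monotone ((arnoldR θ)^[n]) :=
  (arnold_mono θ).iterate n

lemma iter_lip (θ : ℝ) (n : ℕ) {x y : ℝ} (h : x ≤ y) :
    (arnoldR θ)^[n] y - (arnoldR θ)^[n] x ≤ 2^n * (y - x) := by
  induction n with
  | zero => simp
  | succ n ih =>
    rw [Function.iterate_succ_apply', Function.iterate_succ_apply']
    have h1 : (arnoldR θ)^[n] x ≤ (arnoldR θ)^[n] y := iter_mono θ n h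
    have := arnold_lip θ h1
    have h2 : (0:ℝ) < 2^n := by positivity
    calc arnoldR θ ((arnoldR θ)^[n] y) - arnoldR θ ((arnoldR θ)^[n] x)
        ≤ 2 * ((arnoldR θ)^[n] y - (arnoldR θ)^[n] x) := this
      _ ≤ 2 * (2^n * (y-x)) := by linarith
      _ = 2^(n+1) * (y-x) := by ring

lemma arnold_theta (θ θ' x : ℝ) : arnoldR θ x = arnoldR θ' x + (θ - θ') := by
  unfold arnoldR; ring

lemma iter_theta_mono {θ θ' : ℝ} (h : θ' ≤ θ) (n : ℕ) (x : ℝ) :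
    (arnoldR θ')^[n] x ≤ (arnoldR θ)^[n] x := by
  induction n with
  | zero => simp
  | succ n ih =>
    rw [Function.iterate_succ_apply', Function.iterate_succ_apply']
    calc arnoldR θ' ((arnoldR θ')^[n] x) ≤ arnoldR θ' ((arnoldR θ)^[n] x) :=
          arnold_mono θ' ih
      _ ≤ arnoldR θ ((arnoldR θ)^[n] x) := by rw [arnold_theta θ θ']; linarith

lemma iter_theta_gain {θ θ' : ℝ} (h : θ' ≤ θ) {n : ℕ} (hn : 1 ≤ n) (x : ℝ) :
    (arnoldR θ')^[n] x + (θ - θ') ≤ (arnoldR θ)^[n] x := by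
  induction n with
  | zero => omega
  | succ n ih =>
    rcases Nat.eq_or_lt_of_le hn with h1 | h1
    · simp only [← h1, Function.iterate_one]
      rw [arnold_theta θ θ']
    · have hn' : 1 ≤ n := by omega
      rw [Function.iterate_succ_apply', Function.iterate_succ_apply']
      calc arnoldR θ' ((arnoldR θ')^[n] x) + (θ - θ')
          = arnoldR θ ((arnoldR θ')^[n] x) := (arnold_theta θ θ' _).symm
        _ ≤ arnoldR θ ((arnoldR θ)^[n] x) := arnold_mono θ (by
              have := ih hn'; linarith)

lemma iter_theta_lip {θ θ' : ℝ} (h : θ' ≤ θ) (n : ℕ) (x : ℝ) :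
    (arnoldR θ)^[n] x ≤ (arnoldR θ')^[n] x + (2^n - 1) * (θ - θ') := by
  induction n with
  | zero => simp
  | succ n ih =>
    rw [Function.iterate_succ_apply', Function.iterate_succ_apply']
    have hd : (0:ℝ) ≤ θ - θ' := by linarith
    have h1 : (0:ℝ) ≤ (2^n - 1) * (θ - θ') := by
      have : (1:ℝ) ≤ 2^n := one_le_pow₀ (by norm_num)
      nlinarith
    calc arnoldR θ ((arnoldR θ)^[n] x)
        ≤ arnoldR θ ((arnoldR θ')^[n] x + (2^n - 1)*(θ - θ')) :=
          arnold_mono θ ih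
      _ ≤ arnoldR θ ((arnoldR θ')^[n] x) + 2*((2^n-1)*(θ-θ')) := by
          have := arnold_lip θ (le_add_of_nonneg_right h1 :
            (arnoldR θ')^[n] x ≤ (arnoldR θ')^[n] x + (2^n - 1)*(θ - θ'))
          linarith
      _ = arnoldR θ' ((arnoldR θ')^[n] x) + (θ - θ') + 2*((2^n-1)*(θ-θ')) := by
          rw [arnold_theta θ θ']
      _ ≤ arnoldR θ' ((arnoldR θ')^[n] x) + (2^(n+1) - 1)*(θ - θ') := by
          ring_nf; nlinarith

lemma arnold_period (θ x : ℝ) (m : ℤ) : arnoldR θ (x + m) = arnoldR θ x + m := by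
  unfold arnoldR
  have : Real.sin (2 * π * (x + m)) = Real.sin (2 * π * x) := by
    have : 2 * π * (x + m) = 2 * π * x + m * (2 * π) := by ring
    rw [this, Real.sin_add_int_mul_two_pi]
  rw [this]; ring

lemma iter_period (θ x : ℝ) (m : ℤ) (n : ℕ) :
    (arnoldR θ)^[n] (x + m) = (arnoldR θ)^[n] x + m := by
  induction n with
  | zero => simp
  | succ n ih =>
    rw [Function.iterate_succ_apply', Function.iterate_succ_apply', ih,
      arnold_period]

lemma arnold_step_bounds (θ x : ℝ) :
    x + (θ - 1) ≤ arnoldR θ x ∧ arnoldR θ x ≤ x + (θ + 1) := by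
  unfold arnoldR
  have hπ : (3:ℝ) ≤ π := by nlinarith [Real.pi_gt_three]
  have h1 : |Real.sin (2*π*x)| ≤ 1 := Real.abs_sin_le_one _
  have h2 := abs_le.1 h1
  have hp : (0:ℝ) < 2*π := by positivity
  constructor
  · have : -(1:ℝ) ≤ Real.sin (2*π*x) / (2*π) := by
      rw [le_div_iff₀ hp]; nlinarith
    linarith
  · have : Real.sin (2*π*x) / (2*π) ≤ 1 := by
      rw [div_le_iff₀ hp]; nlinarith
    linarith

lemma iter_step_bounds (θ x : ℝ) (n : ℕ) :
    x + n*(θ - 1) ≤ (arnoldR θ)^[n] x ∧ (arnoldR θ)^[n] x ≤ x + n*(θ + 1) := by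
  induction n with
  | zero => simp
  | succ n ih =>
    rw [Function.iterate_succ_apply']
    have h := arnold_step_bounds θ ((arnoldR θ)^[n] x)
    constructor
    · push_cast; nlinarith [ih.1, h.1]
    · push_cast; nlinarith [ih.2, h.2]

lemma iter_cont_theta (n : ℕ) (x : ℝ) :
    Continuous (fun θ : ℝ => (arnoldR θ)^[n] x) := by
  induction n with
  | zero => simpa using continuous_const
  | succ n ih =>
    simp only [Function.iterate_succ_apply']
    unfold arnoldR
    fun_prop

lemma iter_cont_x (θ : ℝ) (n : ℕ) : Continuous ((arnoldR θ)^[n]) := by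
  apply Continuous.iterate
  unfold arnoldR
  fun_prop

lemma step_contract (θ t : ℝ) (ht : 0 < t) (ht' : 2 * π * t ≤ 1) :
    arnoldR θ (1/2 + t) - arnoldR θ (1/2) < π^2 * t^3 := by
  have hπ : (0:ℝ) < π := Real.pi_pos
  have h1 : Real.sin (2 * π * (1/2 + t)) = - Real.sin (2*π*t) := by
    have : 2 * π * (1/2 + t) = π + 2*π*t := by ring
    rw [this, Real.sin_add, Real.sin_pi, Real.cos_pi]; ring
  have h2 : Real.sin (2 * π * (1/2 : ℝ)) = 0 := by
    have : 2 * π * (1/2 : ℝ) = π := by ring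
    rw [this, Real.sin_pi]
  have hu : (0:ℝ) < 2*π*t := by positivity
  have h3 := Real.sin_gt_sub_cube hu
  unfold arnoldR
  rw [h1, h2]
  have key : t - Real.sin (2*π*t) / (2*π) < π^2 * t^3 := by
    rw [sub_lt_iff_lt_add, ← sub_lt_iff_lt_add']
    rw [lt_div_iff₀ (by positivity)]
    nlinarith [h3, (by positivity : (0:ℝ) < π^3 * t^3)]
  simp only [neg_div, zero_div]; linarith [key]

lemma iter_contract {q : ℕ} (hq : 1 ≤ q) :
    ∃ t : ℝ, 0 < t ∧ ∀ θ : ℝ,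
      (arnoldR θ)^[q] (1/2 + t) < (arnoldR θ)^[q] (1/2) + t := by
  obtain ⟨m, rfl⟩ : ∃ m, q = m + 1 := ⟨q - 1, by omega⟩
  have h2m : (1:ℝ) ≤ 2^m := one_le_pow₀ (by norm_num)
  have h2mp : (0:ℝ) < 2^m := by positivity
  set t : ℝ := 1/(8 * 2^m) with htdef
  have ht : 0 < t := by positivity
  have hπ : (0:ℝ) < π := Real.pi_pos
  have hπ4 : π < 3.15 := Real.pi_lt_d2
  have ht' : 2 * π * t ≤ 1 := by
    rw [htdef]
    rw [mul_one_div, div_le_one (by positivity)]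
    nlinarith
  refine ⟨t, ht, fun θ => ?_⟩
  have hs := step_contract θ t ht ht'
  have hmono : arnoldR θ (1/2) ≤ arnoldR θ (1/2 + t) :=
    arnold_mono θ (by linarith)
  have hl := iter_lip θ m hmono
  rw [Function.iterate_succ_apply, Function.iterate_succ_apply]
  have hbound : 2^m * (arnoldR θ (1/2 + t) - arnoldR θ (1/2)) < 2^m * (π^2 * t^3) := by
    exact mul_lt_mul_of_pos_left hs h2mp
  have hfin : 2^m * (π^2 * t^3) ≤ t := by
    rw [htdef]
    rw [div_pow]
    have h4m : ((8:ℝ) * 2^m)^3 = 512 * (2^m)^3 := by ring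
    rw [h4m, one_pow]
    have heq : 2^m * (π^2 * (1/(512*((2:ℝ)^m)^3))) = π^2 / (512 * (2^m)^2) := by
      field_simp
    rw [heq, div_le_div_iff₀ (by positivity) (by positivity)]
    have : π^2 ≤ 10 := by nlinarith
    nlinarith [sq_nonneg ((2:ℝ)^m)]
  linarith [hl, hbound, hfin]

lemma sign_of_no_fix (θ : ℝ) (q : ℕ) (p : ℤ)
    (hnofix : ∀ x : ℝ, (arnoldR θ)^[q] x ≠ x + p) :
    ∃ ε : ℝ, 0 < ε ∧
      ((∀ x : ℝ, x + (p + ε) ≤ (arnoldR θ)^[q] x) ∨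
       (∀ x : ℝ, (arnoldR θ)^[q] x ≤ x + (p - ε))) := by
  set g : ℝ → ℝ := fun x => (arnoldR θ)^[q] x - x - p with hg
  have hgc : Continuous g :=
    Continuous.sub (Continuous.sub (iter_cont_x θ q) continuous_id) continuous_const
  have hgne : ∀ x, g x ≠ 0 := by
    intro x hx
    exact hnofix x (by simp only [hg] at hx; linarith)
  have hsign : (∀ x, 0 < g x) ∨ (∀ x, g x < 0) := by
    by_contra hc
    push_neg at hc
    obtain ⟨⟨a, ha⟩, ⟨b, hb⟩⟩ := hc
    have ha' : g a < 0 := lt_of_le_of_ne ha (hgne a)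
    have hb' : 0 < g b := lt_of_le_of_ne hb (Ne.symm (hgne b))
    have hmem : (0:ℝ) ∈ Set.uIcc (g a) (g b) :=
      Set.mem_uIcc.2 (Or.inl ⟨le_of_lt ha', le_of_lt hb'⟩)
    obtain ⟨c, _, hc0⟩ :=
      intermediate_value_uIcc (f := g) (a := a) (b := b) hgc.continuousOn hmem
    exact hgne c hc0
  have hper : ∀ x : ℝ, g x = g (Int.fract x) := by
    intro x
    have hx : x = Int.fract x + (⌊x⌋ : ℤ) := by rw [Int.fract]; push_cast; ring
    simp only [hg]
    conv_lhs => rw [hx]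
    rw [iter_period]
    push_cast; ring
  rcases hsign with hpos | hneg
  · obtain ⟨x₀, hx₀, hmin⟩ := isCompact_Icc.exists_isMinOn (α := ℝ)
      (s := Set.Icc (0:ℝ) 1) ⟨0, by norm_num⟩ hgc.continuousOn
    refine ⟨g x₀, hpos x₀, Or.inl fun x => ?_⟩
    have h1 : g x₀ ≤ g (Int.fract x) :=
      (isMinOn_iff.mp hmin) _ ⟨Int.fract_nonneg x, (Int.fract_lt_one x).le⟩
    have h2 : g x₀ ≤ g x := by rw [hper x]; exact h1
    have h3 : g x₀ = (arnoldR θ)^[q] x₀ - x₀ - ↑p := rfl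
    have h4 : g x = (arnoldR θ)^[q] x - x - ↑p := rfl
    linarith
  · obtain ⟨x₀, hx₀, hmax⟩ := isCompact_Icc.exists_isMaxOn (α := ℝ)
      (s := Set.Icc (0:ℝ) 1) ⟨0, by norm_num⟩ hgc.continuousOn
    refine ⟨-(g x₀), by linarith [hneg x₀], Or.inr fun x => ?_⟩
    have h1 : g (Int.fract x) ≤ g x₀ :=
      (isMaxOn_iff.mp hmax) _ ⟨Int.fract_nonneg x, (Int.fract_lt_one x).le⟩
    have h2 : g x ≤ g x₀ := by rw [hper x]; exact h1
    have h3 : g x₀ = (arnoldR θ)^[q] x₀ - x₀ - ↑p := rfl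
    have h4 : g x = (arnoldR θ)^[q] x - x - ↑p := rfl
    linarith

lemma orbit_lower (θ c : ℝ) (q : ℕ) (h : ∀ y : ℝ, y + c ≤ (arnoldR θ)^[q] y) :
    ∀ (k : ℕ) (x : ℝ), x + k * c ≤ (arnoldR θ)^[q*k] x := by
  intro k x
  induction k with
  | zero => simp
  | succ k ih =>
    have : q * (k+1) = q + q * k := by ring
    rw [this, Function.iterate_add_apply]
    calc x + (k+1 : ℕ) * c = (x + k * c) + c := by push_cast; ring
      _ ≤ (arnoldR θ)^[q*k] x + c := by linarith
      _ ≤ (arnoldR θ)^[q] ((arnoldR θ)^[q*k] x) := h _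

lemma orbit_upper (θ c : ℝ) (q : ℕ) (h : ∀ y : ℝ, (arnoldR θ)^[q] y ≤ y + c) :
    ∀ (k : ℕ) (x : ℝ), (arnoldR θ)^[q*k] x ≤ x + k * c := by
  intro k x
  induction k with
  | zero => simp
  | succ k ih =>
    have : q * (k+1) = q + q * k := by ring
    rw [this, Function.iterate_add_apply]
    calc (arnoldR θ)^[q] ((arnoldR θ)^[q*k] x) ≤ (arnoldR θ)^[q*k] x + c := h _
      _ ≤ (x + k * c) + c := by linarith
      _ = x + (k+1 : ℕ) * c := by push_cast; ring

lemma orbit_exact (θ : ℝ) (q : ℕ) (p : ℤ) (x : ℝ)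
    (h : (arnoldR θ)^[q] x = x + p) :
    ∀ k : ℕ, (arnoldR θ)^[q*k] x = x + (k : ℝ) * p := by
  intro k
  induction k with
  | zero => simp
  | succ k ih =>
    have hq : q * (k+1) = q + q * k := by ring
    rw [hq, Function.iterate_add_apply, ih]
    have : x + (k:ℝ) * p = x + ((k * p : ℤ) : ℝ) := by push_cast; ring
    rw [this, iter_period, h]
    push_cast; ring

lemma aux_tendsto (x c : ℝ) {q : ℕ} (hq : 1 ≤ q) :
    Tendsto (fun k : ℕ => (x + k * c) / ((q * k : ℕ) : ℝ)) atTop (nhds (c / q)) := by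
  have hq0 : (0:ℝ) < q := by exact_mod_cast hq
  have h1 : Tendsto (fun k : ℕ => ((q * k : ℕ) : ℝ)) atTop atTop := by
    apply tendsto_natCast_atTop_atTop.comp
    exact tendsto_atTop_mono (fun k => Nat.le_mul_of_pos_left k (by omega)) tendsto_id
  have h2 : Tendsto (fun k : ℕ => x * (((q * k : ℕ) : ℝ))⁻¹) atTop (nhds 0) := by
    simpa using (h1.inv_tendsto_atTop).const_mul x
  have h3 : Tendsto (fun k : ℕ => x * (((q * k : ℕ) : ℝ))⁻¹ + c / q) atTop
      (nhds (0 + c / q)) := h2.add tendsto_const_nhds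
  rw [zero_add] at h3
  apply h3.congr'
  filter_upwards [eventually_ge_atTop 1] with k hk
  have hk0 : (0:ℝ) < k := by exact_mod_cast hk
  have : ((q * k : ℕ) : ℝ) = (q:ℝ) * k := by push_cast; ring
  rw [this]
  field_simp

lemma subseq_tendsto (θ x L : ℝ) {q : ℕ} (hq : 1 ≤ q)
    (h : Tendsto (fun n : ℕ => (arnoldR θ)^[n] x / n) atTop (nhds L)) :
    Tendsto (fun k : ℕ => (arnoldR θ)^[q*k] x / ((q*k : ℕ) : ℝ)) atTop (nhds L) :=
  h.comp (tendsto_atTop_mono (fun k => Nat.le_mul_of_pos_left k (by omega)) tendsto_id)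

lemma rho_eq_of_fix (θ x L : ℝ) {q : ℕ} (hq : 1 ≤ q) (p : ℤ)
    (h : Tendsto (fun n : ℕ => (arnoldR θ)^[n] x / n) atTop (nhds L))
    (hfix : (arnoldR θ)^[q] x = x + p) : L = (p : ℝ) / q := by
  have h1 := subseq_tendsto θ x L hq h
  have h2 := aux_tendsto x p hq
  refine tendsto_nhds_unique (h1.congr fun k => ?_) h2
  rw [orbit_exact θ q p x hfix k]

lemma rho_ne_of_no_fix (θ x L : ℝ) {q : ℕ} (hq : 1 ≤ q) (p : ℤ)
    (h : Tendsto (fun n : ℕ => (arnoldR θ)^[n] x / n) atTop (nhds L))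
    (hnofix : ∀ y : ℝ, (arnoldR θ)^[q] y ≠ y + p) : L ≠ (p : ℝ) / q := by
  have hq0 : (0:ℝ) < q := by exact_mod_cast hq
  have h1 := subseq_tendsto θ x L hq h
  obtain ⟨ε, hε, hcase⟩ := sign_of_no_fix θ q p hnofix
  rcases hcase with hlo | hhi
  · have h2 := aux_tendsto x (p + ε) hq
    have hle : ((p:ℝ) + ε)/q ≤ L := by
      refine le_of_tendsto_of_tendsto h2 h1 ?_
      filter_upwards [eventually_ge_atTop 1] with k hk
      have hd : (0:ℝ) < ((q*k : ℕ) : ℝ) := by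
        have : 1 ≤ q * k := Nat.one_le_iff_ne_zero.2 (by positivity)
        exact_mod_cast this
      have := orbit_lower θ ((p:ℝ) + ε) q hlo k x
      exact div_le_div_of_nonneg_right this hd.le |>.trans_eq rfl
    intro hL
    rw [hL] at hle
    have : (p:ℝ)/q < ((p:ℝ)+ε)/q := by gcongr; linarith
    linarith
  · have h2 := aux_tendsto x ((p:ℝ) - ε) hq
    have hle : L ≤ ((p:ℝ) - ε)/q := by
      refine le_of_tendsto_of_tendsto h1 h2 ?_
      filter_upwards [eventually_ge_atTop 1] with k hk
      have hd : (0:ℝ) < ((q*k : ℕ) : ℝ) := by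
        have : 1 ≤ q * k := Nat.one_le_iff_ne_zero.2 (by positivity)
        exact_mod_cast this
      have := orbit_upper θ ((p:ℝ) - ε) q hhi k x
      exact div_le_div_of_nonneg_right this hd.le |>.trans_eq rfl
    intro hL
    rw [hL] at hle
    have : ((p:ℝ) - ε)/q < (p:ℝ)/q := by gcongr; linarith
    linarith

lemma exists_root {q : ℕ} (hq : 1 ≤ q) (p : ℤ) (a : ℝ) :
    ∃ θ : ℝ, (arnoldR θ)^[q] a = a + p := by
  have hq0 : (0:ℝ) < q := by exact_mod_cast hq
  set f : ℝ → ℝ := fun θ => (arnoldR θ)^[q] a with hf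
  have hfc : Continuous f := iter_cont_theta q a
  set θlo : ℝ := ((p:ℝ) - q)/q with hlo
  set θhi : ℝ := ((p:ℝ) + q)/q with hhi
  have hle : θlo ≤ θhi := by
    rw [hlo, hhi, div_le_div_iff_of_pos_right hq0]; linarith
  have h1 : f θlo ≤ a + p := by
    have := (iter_step_bounds θlo a q).2
    have he : (q:ℝ) * (θlo + 1) = (p:ℝ) := by rw [hlo]; field_simp; ring
    show (arnoldR θlo)^[q] a ≤ a + p
    nlinarith [this]
  have h2 : a + p ≤ f θhi := by
    have := (iter_step_bounds θhi a q).1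
    have he : (q:ℝ) * (θhi - 1) = (p:ℝ) := by rw [hhi]; field_simp; ring
    show a + p ≤ (arnoldR θhi)^[q] a
    nlinarith [this]
  obtain ⟨θ, _, hθ⟩ := intermediate_value_Icc hle hfc.continuousOn ⟨h1, h2⟩
  exact ⟨θ, hθ⟩

lemma compl_open {q : ℕ} (p : ℤ) {θ : ℝ}
    (hnofix : ∀ x : ℝ, (arnoldR θ)^[q] x ≠ x + p) :
    ∃ δ : ℝ, 0 < δ ∧ ∀ θ' : ℝ, |θ' - θ| < δ → ∀ x : ℝ, (arnoldR θ')^[q] x ≠ x + p := by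
  obtain ⟨ε, hε, hcase⟩ := sign_of_no_fix θ q p hnofix
  have h2q : (1:ℝ) ≤ 2^q := one_le_pow₀ (by norm_num)
  refine ⟨ε/2^q, by positivity, fun θ' hθ' x hx => ?_⟩
  have habs := abs_lt.1 hθ'
  rcases hcase with hlo | hhi
  · rcases le_or_gt θ θ' with h | h
    · have := iter_theta_mono h q x
      have := hlo x
      linarith
    · have hl := iter_theta_lip h.le q x
      have := hlo x
      have hb : (2^q - 1) * (θ - θ') < ε := by
        have h1 : θ - θ' < ε/2^q := by linarith
        have h2 : (0:ℝ) < 2^q := by positivity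
        rw [div_eq_mul_inv] at h1
        have h3 : (0:ℝ) ≤ 2^q - 1 := by linarith
        have h4 := mul_le_mul_of_nonneg_left h1.le h3
        have h6 : ((2:ℝ)^q) * ((2:ℝ)^q)⁻¹ = 1 := mul_inv_cancel₀ (by positivity)
        have h5 : (2^q - 1) * (ε * ((2:ℝ)^q)⁻¹) < ε := by
          nlinarith [mul_pos hε (show (0:ℝ) < ((2:ℝ)^q)⁻¹ by positivity)]
        linarith
      linarith
  · rcases le_or_gt θ' θ with h | h
    · have := iter_theta_mono h q x
      have := hhi x
      linarith
    · have hl := iter_theta_lip h.le q x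
      have := hhi x
      have hb : (2^q - 1) * (θ' - θ) < ε := by
        have h1 : θ' - θ < ε/2^q := by linarith
        have h2 : (0:ℝ) < 2^q := by positivity
        rw [div_eq_mul_inv] at h1
        have h3 : (0:ℝ) ≤ 2^q - 1 := by linarith
        have h4 := mul_le_mul_of_nonneg_left h1.le h3
        have h6 : ((2:ℝ)^q) * ((2:ℝ)^q)⁻¹ = 1 := mul_inv_cancel₀ (by positivity)
        have h5 : (2^q - 1) * (ε * ((2:ℝ)^q)⁻¹) < ε := by
          nlinarith [mul_pos hε (show (0:ℝ) < ((2:ℝ)^q)⁻¹ by positivity)]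
        linarith
      linarith


/-- Rational rotation numbers are attained on nondegenerate closed intervals of
parameters (Arnold tongues): for every rational `p/q` (`p ∈ ℤ`, `q ≥ 1`) there are
`θ₁ < θ₂` with `{θ : ρ(θ) = p/q} = [θ₁, θ₂]`; moreover, for every `θ` in this interval
the map `A_θ` has a periodic orbit of rotation number `p/q`, i.e. some `x ∈ ℝ` with
`A_θ^{∘q}(x) = x + p`. -/
theorem arnold_tongues (ρ : ℝ → ℝ)
    (hρ : ∀ θ x : ℝ,
      Filter.Tendsto (fun n : ℕ => (arnoldR θ)^[n] x / n) Filter.atTop (nhds (ρ θ))) :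
    ∀ (p : ℤ) (q : ℕ), 1 ≤ q →
      ∃ θ₁ θ₂ : ℝ, θ₁ < θ₂ ∧
        {θ : ℝ | ρ θ = (p : ℝ) / (q : ℝ)} = Set.Icc θ₁ θ₂ ∧
        ∀ θ ∈ Set.Icc θ₁ θ₂, ∃ x : ℝ, (arnoldR θ)^[q] x = x + (p : ℝ) := by
  intro p q hq
  have hq0 : (0:ℝ) < q := by exact_mod_cast hq
  set S : Set ℝ := {θ | ∃ x : ℝ, (arnoldR θ)^[q] x = x + p} with hS
  -- S is bounded
  have hSub : S ⊆ Set.Icc ((p:ℝ)/q - 1) ((p:ℝ)/q + 1) := by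
    rintro θ ⟨x, hx⟩
    have h1 := (iter_step_bounds θ x q).1
    have h2 := (iter_step_bounds θ x q).2
    rw [hx] at h1 h2
    constructor
    · have : (p:ℝ)/q ≤ θ + 1 := by rw [div_le_iff₀ hq0]; nlinarith
      linarith
    · have : θ - 1 ≤ (p:ℝ)/q := by rw [le_div_iff₀ hq0]; nlinarith
      linarith
  have hBddA : BddAbove S := ⟨(p:ℝ)/q + 1, fun θ hθ => (hSub hθ).2⟩
  have hBddB : BddBelow S := ⟨(p:ℝ)/q - 1, fun θ hθ => (hSub hθ).1⟩
  -- two distinct elements of S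
  obtain ⟨t, ht, hco⟩ := iter_contract hq
  obtain ⟨θa, hθa⟩ := exists_root hq p (1/2 : ℝ)
  obtain ⟨θb, hθb⟩ := exists_root hq p (1/2 + t : ℝ)
  have hθaS : θa ∈ S := ⟨1/2, hθa⟩
  have hθbS : θb ∈ S := ⟨1/2 + t, hθb⟩
  have hab : θa < θb := by
    by_contra hc
    push_neg at hc
    have h1 := iter_theta_mono hc q (1/2 + t)
    have h2 := hco θa
    rw [hθa] at h2
    rw [hθb] at h1
    linarith
  -- convexity
  have hconv : ∀ θ' ∈ S, ∀ θ'' ∈ S, ∀ θ : ℝ, θ' ≤ θ → θ ≤ θ'' → θ ∈ S := by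
    rintro θ' ⟨x', hx'⟩ θ'' ⟨x'', hx''⟩ θ hl hr
    set g : ℝ → ℝ := fun x => (arnoldR θ)^[q] x - x - p with hg
    have hgc : Continuous g :=
      Continuous.sub (Continuous.sub (iter_cont_x θ q) continuous_id) continuous_const
    have hgx' : 0 ≤ g x' := by
      have := iter_theta_mono hl q x'
      rw [hx'] at this
      simp only [hg]; linarith
    have hgx'' : g x'' ≤ 0 := by
      have := iter_theta_mono hr q x''
      rw [hx''] at this
      simp only [hg]; linarith
    have hmem : (0:ℝ) ∈ Set.uIcc (g x'') (g x') := Set.mem_uIcc.2 (Or.inl ⟨hgx'', hgx'⟩)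
    obtain ⟨c, _, hc0⟩ :=
      intermediate_value_uIcc (f := g) (a := x'') (b := x') hgc.continuousOn hmem
    refine ⟨c, ?_⟩
    have : (arnoldR θ)^[q] c - c - p = 0 := hc0
    linarith
  -- S is closed
  have hclosed : IsClosed S := by
    rw [← isOpen_compl_iff, Metric.isOpen_iff]
    intro θ hθ
    have hnofix : ∀ x : ℝ, (arnoldR θ)^[q] x ≠ x + p := by
      intro x hx
      exact hθ ⟨x, hx⟩
    obtain ⟨δ, hδ, hd⟩ := compl_open p hnofix
    refine ⟨δ, hδ, fun θ' hθ' => ?_⟩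
    rw [Metric.mem_ball, Real.dist_eq] at hθ'
    rintro ⟨x, hx⟩
    exact hd θ' hθ' x hx
  have hne : S.Nonempty := ⟨θa, hθaS⟩
  set θ₁ : ℝ := sInf S with hθ₁
  set θ₂ : ℝ := sSup S with hθ₂
  have hθ₁S : θ₁ ∈ S := hclosed.csInf_mem hne hBddB
  have hθ₂S : θ₂ ∈ S := hclosed.csSup_mem hne hBddA
  have hlt : θ₁ < θ₂ :=
    lt_of_le_of_lt (csInf_le hBddB hθaS) (lt_of_lt_of_le hab (le_csSup hBddA hθbS))
  have hSIcc : S = Set.Icc θ₁ θ₂ := by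
    ext θ
    constructor
    · intro hθ
      exact ⟨csInf_le hBddB hθ, le_csSup hBddA hθ⟩
    · rintro ⟨h1, h2⟩
      exact hconv θ₁ hθ₁S θ₂ hθ₂S θ h1 h2
  have hrho : {θ : ℝ | ρ θ = (p : ℝ) / (q : ℝ)} = S := by
    ext θ
    constructor
    · intro hθ
      by_contra hc
      have hnofix : ∀ x : ℝ, (arnoldR θ)^[q] x ≠ x + p := by
        intro x hx
        exact hc ⟨x, hx⟩
      exact rho_ne_of_no_fix θ 0 (ρ θ) hq p (hρ θ 0) hnofix hθ
    · rintro ⟨x, hx⟩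
      exact rho_eq_of_fix θ x (ρ θ) hq p (hρ θ x) hx
  refine ⟨θ₁, θ₂, hlt, hrho.trans hSIcc, fun θ hθ => ?_⟩
  rw [← hSIcc] at hθ
  exact hθ
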